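/- (Cut-elimination for SELLS) Every sequent provable in the sequent calculus SELLS_Σ with the cut rule is provable in SELLS_Σ without the cut rule. -/

import Mathlib

/-- A c-semiring `⟨A, +, ×, ⊥, ⊤⟩`: `+` is commutative, associative and idempotent
with unit `⊥` and absorbing element `⊤`; `×` is commutative and associative with
unit `⊤` and absorbing element `⊥`; and `×` distributes over `+`. -/
structure CSemiring (A : Type*) where
  add : A → A → A
  mul : A → A → A
  bot : A
  top : A
  add_comm : ∀ a b, add a b = add b a
  add_assoc : ∀ a b c, add (add a b) c = add a (add b c)
  add_idem : ∀ a, add a a = a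
  add_unit : ∀ a, add a bot = a
  add_absorb : ∀ a, add a top = top
  mul_comm : ∀ a b, mul a b = mul b a
  mul_assoc : ∀ a b c, mul (mul a b) c = mul a (mul b c)
  mul_unit : ∀ a, mul a top = a
  mul_absorb : ∀ a, mul a bot = bot
  mul_add : ∀ a b c, mul a (add b c) = add (mul a b) (mul a c)

/-- The order induced by `+`: `a ≤ b` iff `a + b = b`. -/
def CSemiring.le {A : Type*} (S : CSemiring A) (a b : A) : Prop := S.add a b = b

/-- Product `a₁ × ⋯ × aₙ` of a list of c-semiring elements (`⊤` for the empty list). -/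
def CSemiring.prod {A : Type*} (S : CSemiring A) (l : List A) : A :=
  l.foldr S.mul S.top

/-- First-order terms over an arity-indexed family `Fn` of function symbols,
with de Bruijn variables. -/
inductive STerm (Fn : ℕ → Type) : Type
  | var : ℕ → STerm Fn
  | func : {n : ℕ} → Fn n → (Fin n → STerm Fn) → STerm Fn

/-- Shift up by one the variables `≥ k`. -/
def STerm.lift {Fn : ℕ → Type} (k : ℕ) : STerm Fn → STerm Fn
  | .var n => .var (if n < k then n else n + 1)
  | .func f ts => .func f (fun i => (ts i).lift k)

/-- Substitute the term `s` for the variable `k` (shifting down variables `> k`). -/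
def STerm.subst {Fn : ℕ → Type} (k : ℕ) (s : STerm Fn) : STerm Fn → STerm Fn
  | .var n => if n < k then .var n else if n = k then s else .var (n - 1)
  | .func f ts => .func f (fun i => STerm.subst k s (ts i))

/-- Formulas of SELLS over subexponential labels `A`, function symbols `Fn`
and predicate symbols `Pr`. Quantifiers bind de Bruijn variable `0`. -/
inductive SFormula (A : Type) (Fn Pr : ℕ → Type) : Type
  | atom : {n : ℕ} → Pr n → (Fin n → STerm Fn) → SFormula A Fn Pr
  | one : SFormula A Fn Pr
  | top : SFormula A Fn Pr
  | tensor : SFormula A Fn Pr → SFormula A Fn Pr → SFormula A Fn Pr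
  | limp : SFormula A Fn Pr → SFormula A Fn Pr → SFormula A Fn Pr
  | with_ : SFormula A Fn Pr → SFormula A Fn Pr → SFormula A Fn Pr
  | ex : SFormula A Fn Pr → SFormula A Fn Pr
  | all : SFormula A Fn Pr → SFormula A Fn Pr
  | bang : A → SFormula A Fn Pr → SFormula A Fn Pr

/-- Shift up by one the free variables `≥ k` of a formula. -/
def SFormula.lift {A : Type} {Fn Pr : ℕ → Type} (k : ℕ) :
    SFormula A Fn Pr → SFormula A Fn Pr
  | .atom p ts => .atom p (fun i => (ts i).lift k)
  | .one => .one
  | .top => .top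
  | .tensor F G => .tensor (F.lift k) (G.lift k)
  | .limp F G => .limp (F.lift k) (G.lift k)
  | .with_ F G => .with_ (F.lift k) (G.lift k)
  | .ex F => .ex (F.lift (k + 1))
  | .all F => .all (F.lift (k + 1))
  | .bang a F => .bang a (F.lift k)

/-- Capture-avoiding substitution of the term `s` for the free variable `k`. -/
def SFormula.subst {A : Type} {Fn Pr : ℕ → Type} (k : ℕ) (s : STerm Fn) :
    SFormula A Fn Pr → SFormula A Fn Pr
  | .atom p ts => .atom p (fun i => STerm.subst k s (ts i))
  | .one => .one
  | .top => .top
  | .tensor F G => .tensor (F.subst k s) (G.subst k s)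
  | .limp F G => .limp (F.subst k s) (G.subst k s)
  | .with_ F G => .with_ (F.subst k s) (G.subst k s)
  | .ex F => .ex (F.subst (k + 1) (s.lift 0))
  | .all F => .all (F.subst (k + 1) (s.lift 0))
  | .bang a F => .bang a (F.subst k s)

/-- The sequent calculus `SELLS_Σ` over the subexponential signature
`Σ = ⟨A, ≤, A⟩` induced by the c-semiring `S` (all labels are unbounded).
The boolean index tells whether the cut rule is available. -/
inductive SELLS {A : Type} (S : CSemiring A) (Fn Pr : ℕ → Type) :
    Bool → Multiset (SFormula A Fn Pr) → SFormula A Fn Pr → Prop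
  | init (cut : Bool) {n : ℕ} (p : Pr n) (ts : Fin n → STerm Fn) :
      SELLS S Fn Pr cut {.atom p ts} (.atom p ts)
  | oneR (cut : Bool) : SELLS S Fn Pr cut 0 .one
  | oneL {cut Γ G} : SELLS S Fn Pr cut Γ G → SELLS S Fn Pr cut (.one ::ₘ Γ) G
  | tensorR {cut Γ Δ F H} : SELLS S Fn Pr cut Γ F → SELLS S Fn Pr cut Δ H →
      SELLS S Fn Pr cut (Γ + Δ) (.tensor F H)
  | tensorL {cut Γ F H G} : SELLS S Fn Pr cut (F ::ₘ H ::ₘ Γ) G →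
      SELLS S Fn Pr cut (.tensor F H ::ₘ Γ) G
  | limpR {cut Γ F H} : SELLS S Fn Pr cut (F ::ₘ Γ) H →
      SELLS S Fn Pr cut Γ (.limp F H)
  | limpL {cut Γ Δ F H G} : SELLS S Fn Pr cut Γ F →
      SELLS S Fn Pr cut (H ::ₘ Δ) G →
      SELLS S Fn Pr cut (.limp F H ::ₘ (Γ + Δ)) G
  | withR {cut Γ F H} : SELLS S Fn Pr cut Γ F → SELLS S Fn Pr cut Γ H →
      SELLS S Fn Pr cut Γ (.with_ F H)
  | withL1 {cut Γ F H G} : SELLS S Fn Pr cut (F ::ₘ Γ) G →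
      SELLS S Fn Pr cut (.with_ F H ::ₘ Γ) G
  | withL2 {cut Γ F H G} : SELLS S Fn Pr cut (H ::ₘ Γ) G →
      SELLS S Fn Pr cut (.with_ F H ::ₘ Γ) G
  | topR (cut : Bool) (Γ : Multiset (SFormula A Fn Pr)) : SELLS S Fn Pr cut Γ .top
  | exR {cut Γ F} (t : STerm Fn) : SELLS S Fn Pr cut Γ (F.subst 0 t) →
      SELLS S Fn Pr cut Γ (.ex F)
  | exL {cut Γ F G} :
      SELLS S Fn Pr cut (F ::ₘ Γ.map (SFormula.lift 0)) (G.lift 0) →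
      SELLS S Fn Pr cut (.ex F ::ₘ Γ) G
  | allL {cut Γ F G} (t : STerm Fn) : SELLS S Fn Pr cut (F.subst 0 t ::ₘ Γ) G →
      SELLS S Fn Pr cut (.all F ::ₘ Γ) G
  | allR {cut Γ F} : SELLS S Fn Pr cut (Γ.map (SFormula.lift 0)) F →
      SELLS S Fn Pr cut Γ (.all F)
  | der {cut Γ a F G} : SELLS S Fn Pr cut (F ::ₘ Γ) G →
      SELLS S Fn Pr cut (.bang a F ::ₘ Γ) G
  | weak {cut Γ a F G} : SELLS S Fn Pr cut Γ G →
      SELLS S Fn Pr cut (.bang a F ::ₘ Γ) G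
  | contr {cut Γ a F G} : SELLS S Fn Pr cut (.bang a F ::ₘ .bang a F ::ₘ Γ) G →
      SELLS S Fn Pr cut (.bang a F ::ₘ Γ) G
  | prom {cut} (L : List (A × SFormula A Fn Pr)) {a F}
      (hle : S.le a (S.prod (L.map Prod.fst))) :
      SELLS S Fn Pr cut (↑(L.map (fun p => SFormula.bang p.1 p.2))) F →
      SELLS S Fn Pr cut (↑(L.map (fun p => SFormula.bang p.1 p.2))) (.bang a F)
  | cut {Γ Δ F G} : SELLS S Fn Pr true Γ F → SELLS S Fn Pr true (F ::ₘ Δ) G →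
      SELLS S Fn Pr true (Γ + Δ) G

namespace SellsCutElim

variable {A : Type} {Fn Pr : ℕ → Type}

/-! ### Simultaneous substitution on terms -/

def ssubT (σ : ℕ → STerm Fn) : STerm Fn → STerm Fn
  | .var n => σ n
  | .func f ts => .func f (fun i => ssubT σ (ts i))

/-- valuation of `lift k` as a renaming -/
def lval (k : ℕ) : ℕ → STerm Fn := fun n => .var (if n < k then n else n + 1)

/-- valuation of `subst k s` -/
def sval (k : ℕ) (s : STerm Fn) : ℕ → STerm Fn :=
  fun n => if n < k then .var n else if n = k then s else .var (n - 1)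

/-- shift a valuation under a binder -/
def upv (σ : ℕ → STerm Fn) : ℕ → STerm Fn
  | 0 => .var 0
  | n + 1 => (σ n).lift 0

/-- extend a valuation with a term for variable 0 -/
def consv (t : STerm Fn) (σ : ℕ → STerm Fn) : ℕ → STerm Fn
  | 0 => t
  | n + 1 => σ n

/-- the identity valuation -/
def varv : ℕ → STerm Fn := fun n => .var n

theorem lift_var0 (m : ℕ) : (STerm.var m : STerm Fn).lift 0 = .var (m + 1) := by
  simp [STerm.lift]

theorem ssubT_var (t : STerm Fn) : ssubT varv t = t := by
  induction t with
  | var n => rfl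
  | func f ts ih => exact congrArg _ (funext ih)

theorem lift_eq_ssubT (k : ℕ) (t : STerm Fn) : t.lift k = ssubT (lval k) t := by
  induction t generalizing k with
  | var n => rfl
  | func f ts ih => exact congrArg _ (funext fun i => ih i k)

theorem subst_eq_ssubT (k : ℕ) (s : STerm Fn) (t : STerm Fn) :
    STerm.subst k s t = ssubT (sval k s) t := by
  induction t generalizing k s with
  | var n => rfl
  | func f ts ih => exact congrArg _ (funext fun i => ih i k s)

theorem ssubT_ssubT (θ τ : ℕ → STerm Fn) (t : STerm Fn) :
    ssubT θ (ssubT τ t) = ssubT (fun n => ssubT θ (τ n)) t := by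
  induction t with
  | var n => rfl
  | func f ts ih => exact congrArg _ (funext ih)

theorem ssubT_lift0 (θ : ℕ → STerm Fn) (t : STerm Fn) :
    ssubT (upv θ) (t.lift 0) = (ssubT θ t).lift 0 := by
  rw [lift_eq_ssubT, ssubT_ssubT, lift_eq_ssubT 0 (ssubT θ t), ssubT_ssubT]
  congr 1
  funext n
  simp [lval, ssubT, upv, ← lift_eq_ssubT]

theorem upv_varv : upv (varv : ℕ → STerm Fn) = varv := by
  funext n
  cases n with
  | zero => rfl
  | succ n => simp [upv, varv, lift_var0]

theorem upv_lval (k : ℕ) : upv (lval k : ℕ → STerm Fn) = lval (k + 1) := by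
  funext n
  cases n with
  | zero => simp [upv, lval]
  | succ n =>
    show (lval k n).lift 0 = _
    by_cases h : n < k
    · rw [lval, if_pos h, lift_var0, lval, if_pos (by omega)]
    · rw [lval, if_neg h, lift_var0, lval, if_neg (by omega)]

theorem upv_sval (k : ℕ) (s : STerm Fn) : upv (sval k s) = sval (k + 1) (s.lift 0) := by
  funext n
  cases n with
  | zero => simp [upv, sval]
  | succ n =>
    show (sval k s n).lift 0 = _
    rcases lt_trichotomy n k with h | h | h
    · rw [sval, if_pos h, lift_var0, sval, if_pos (by omega)]
    · subst h
      rw [sval, if_neg (by omega), if_pos rfl, sval, if_neg (by omega), if_pos rfl]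
    · rw [sval, if_neg (by omega), if_neg (by omega), lift_var0,
        sval, if_neg (by omega), if_neg (by omega)]
      congr 1
      omega

end SellsCutElim

namespace SellsCutElim

variable {A : Type} {Fn Pr : ℕ → Type}

/-! ### Simultaneous substitution on formulas -/

def ssubF (σ : ℕ → STerm Fn) : SFormula A Fn Pr → SFormula A Fn Pr
  | .atom p ts => .atom p (fun i => ssubT σ (ts i))
  | .one => .one
  | .top => .top
  | .tensor F G => .tensor (ssubF σ F) (ssubF σ G)
  | .limp F G => .limp (ssubF σ F) (ssubF σ G)
  | .with_ F G => .with_ (ssubF σ F) (ssubF σ G)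
  | .ex F => .ex (ssubF (upv σ) F)
  | .all F => .all (ssubF (upv σ) F)
  | .bang a F => .bang a (ssubF σ F)

theorem ssubF_var (F : SFormula A Fn Pr) : ssubF varv F = F := by
  induction F with
  | atom p ts => exact congrArg _ (funext fun i => ssubT_var (ts i))
  | one => rfl
  | top => rfl
  | tensor F G ihF ihG => rw [ssubF, ihF, ihG]
  | limp F G ihF ihG => rw [ssubF, ihF, ihG]
  | with_ F G ihF ihG => rw [ssubF, ihF, ihG]
  | ex F ih => rw [ssubF, upv_varv, ih]
  | all F ih => rw [ssubF, upv_varv, ih]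
  | bang a F ih => rw [ssubF, ih]

theorem liftF_eq_ssubF (k : ℕ) (F : SFormula A Fn Pr) :
    F.lift k = ssubF (lval k) F := by
  induction F generalizing k with
  | atom p ts => exact congrArg _ (funext fun i => lift_eq_ssubT k (ts i))
  | one => rfl
  | top => rfl
  | tensor F G ihF ihG => rw [SFormula.lift, ssubF, ihF, ihG]
  | limp F G ihF ihG => rw [SFormula.lift, ssubF, ihF, ihG]
  | with_ F G ihF ihG => rw [SFormula.lift, ssubF, ihF, ihG]
  | ex F ih => rw [SFormula.lift, ssubF, upv_lval, ih]
  | all F ih => rw [SFormula.lift, ssubF, upv_lval, ih]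
  | bang a F ih => rw [SFormula.lift, ssubF, ih]

theorem substF_eq_ssubF (k : ℕ) (s : STerm Fn) (F : SFormula A Fn Pr) :
    F.subst k s = ssubF (sval k s) F := by
  induction F generalizing k s with
  | atom p ts => exact congrArg _ (funext fun i => subst_eq_ssubT k s (ts i))
  | one => rfl
  | top => rfl
  | tensor F G ihF ihG => rw [SFormula.subst, ssubF, ihF, ihG]
  | limp F G ihF ihG => rw [SFormula.subst, ssubF, ihF, ihG]
  | with_ F G ihF ihG => rw [SFormula.subst, ssubF, ihF, ihG]
  | ex F ih => rw [SFormula.subst, ssubF, upv_sval, ih]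
  | all F ih => rw [SFormula.subst, ssubF, upv_sval, ih]
  | bang a F ih => rw [SFormula.subst, ssubF, ih]

theorem ssubF_ssubF (θ τ : ℕ → STerm Fn) (F : SFormula A Fn Pr) :
    ssubF θ (ssubF τ F) = ssubF (fun n => ssubT θ (τ n)) F := by
  induction F generalizing θ τ with
  | atom p ts => exact congrArg _ (funext fun i => ssubT_ssubT θ τ (ts i))
  | one => rfl
  | top => rfl
  | tensor F G ihF ihG => rw [ssubF, ssubF, ssubF, ihF, ihG]
  | limp F G ihF ihG => rw [ssubF, ssubF, ssubF, ihF, ihG]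
  | with_ F G ihF ihG => rw [ssubF, ssubF, ssubF, ihF, ihG]
  | ex F ih =>
    rw [ssubF, ssubF, ssubF, ih]
    have h : (fun n => ssubT (upv θ) (upv τ n)) = upv (fun n => ssubT θ (τ n)) := by
      funext n
      cases n with
      | zero => rfl
      | succ n => exact ssubT_lift0 θ (τ n)
    rw [h]
  | all F ih =>
    rw [ssubF, ssubF, ssubF, ih]
    have h : (fun n => ssubT (upv θ) (upv τ n)) = upv (fun n => ssubT θ (τ n)) := by
      funext n
      cases n with
      | zero => rfl
      | succ n => exact ssubT_lift0 θ (τ n)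
    rw [h]
  | bang a F ih => rw [ssubF, ssubF, ssubF, ih]

/-- `F⟨up σ⟩[t/0] = F⟨t :: σ⟩` -/
theorem subst0_ssubF_upv (σ : ℕ → STerm Fn) (t : STerm Fn) (F : SFormula A Fn Pr) :
    (ssubF (upv σ) F).subst 0 t = ssubF (consv t σ) F := by
  rw [substF_eq_ssubF, ssubF_ssubF]
  congr 1
  funext n
  cases n with
  | zero => rfl
  | succ n =>
    show ssubT (sval 0 t) ((σ n).lift 0) = σ n
    rw [lift_eq_ssubT, ssubT_ssubT]
    have h2 : (fun m => ssubT (sval 0 t) (lval 0 m)) = (varv : ℕ → STerm Fn) := by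
      funext m
      show ssubT (sval 0 t) (.var (if m < 0 then m else m + 1)) = _
      rw [if_neg (by omega)]
      show sval 0 t (m + 1) = _
      rw [sval, if_neg (by omega), if_neg (by omega)]
      show STerm.var (m + 1 - 1) = _
      rw [Nat.add_sub_cancel]
      rfl
    rw [h2, ssubT_var]

/-- `(F[t/0])⟨θ⟩ = F⟨up θ⟩[t⟨θ⟩/0]` -/
theorem ssubF_subst0 (θ : ℕ → STerm Fn) (t : STerm Fn) (F : SFormula A Fn Pr) :
    ssubF θ (F.subst 0 t) = (ssubF (upv θ) F).subst 0 (ssubT θ t) := by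
  rw [substF_eq_ssubF, ssubF_ssubF, substF_eq_ssubF, ssubF_ssubF]
  congr 1
  funext n
  cases n with
  | zero => rfl
  | succ n =>
    show ssubT θ (sval 0 t (n+1)) = ssubT (sval 0 (ssubT θ t)) ((θ n).lift 0)
    rw [lift_eq_ssubT, ssubT_ssubT]
    have h1 : sval (Fn := Fn) 0 t (n+1) = .var n := by
      rw [sval]; rw [if_neg (by omega), if_neg (by omega), Nat.add_sub_cancel]
    have h2 : (fun m => ssubT (sval 0 (ssubT θ t)) (lval 0 m)) = (varv : ℕ → STerm Fn) := by
      funext m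
      show ssubT (sval 0 (ssubT θ t)) (.var (if m < 0 then m else m + 1)) = _
      rw [if_neg (by omega)]
      show sval 0 (ssubT θ t) (m+1) = _
      rw [sval, if_neg (by omega), if_neg (by omega)]
      rfl
    rw [h1, h2, ssubT_var]
    rfl

/-- `(K.lift 0)⟨up θ⟩ = (K⟨θ⟩).lift 0` -/
theorem ssubF_lift0 (θ : ℕ → STerm Fn) (K : SFormula A Fn Pr) :
    ssubF (upv θ) (K.lift 0) = (ssubF θ K).lift 0 := by
  rw [liftF_eq_ssubF, ssubF_ssubF, liftF_eq_ssubF 0 (ssubF θ K), ssubF_ssubF]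
  congr 1
  funext n
  show ssubT (upv θ) (lval 0 n) = ssubT (lval 0) (θ n)
  rw [← lift_eq_ssubT]
  show ssubT (upv θ) (.var (if n < 0 then n else n + 1)) = _
  rw [if_neg (by omega)]
  rfl

end SellsCutElim

namespace SellsCutElim

variable {A : Type} {Fn Pr : ℕ → Type}

/-! ### Free variables -/

def fvT : STerm Fn → Finset ℕ
  | .var n => {n}
  | .func _ ts => Finset.univ.biUnion fun i => fvT (ts i)

def predFv (s : Finset ℕ) : Finset ℕ := (s.erase 0).image (· - 1)

def fvF : SFormula A Fn Pr → Finset ℕ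
  | .atom _ ts => Finset.univ.biUnion fun i => fvT (ts i)
  | .one => ∅
  | .top => ∅
  | .tensor F G => fvF F ∪ fvF G
  | .limp F G => fvF F ∪ fvF G
  | .with_ F G => fvF F ∪ fvF G
  | .ex F => predFv (fvF F)
  | .all F => predFv (fvF F)
  | .bang _ F => fvF F

theorem mem_predFv {s : Finset ℕ} {n : ℕ} (h : n + 1 ∈ s) : n ∈ predFv s := by
  refine Finset.mem_image.2 ⟨n + 1, Finset.mem_erase.2 ⟨Nat.succ_ne_zero n, h⟩, rfl⟩

theorem ssubT_congr {θ τ : ℕ → STerm Fn} {t : STerm Fn}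
    (h : ∀ n ∈ fvT t, θ n = τ n) : ssubT θ t = ssubT τ t := by
  induction t with
  | var n => exact h n (Finset.mem_singleton_self n)
  | func f ts ih =>
    exact congrArg _ (funext fun i => ih i fun n hn =>
      h n (Finset.mem_biUnion.2 ⟨i, Finset.mem_univ i, hn⟩))

theorem ssubF_congr {θ τ : ℕ → STerm Fn} {F : SFormula A Fn Pr}
    (h : ∀ n ∈ fvF F, θ n = τ n) : ssubF θ F = ssubF τ F := by
  induction F generalizing θ τ with
  | atom p ts =>
    exact congrArg _ (funext fun i => ssubT_congr fun n hn =>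
      h n (Finset.mem_biUnion.2 ⟨i, Finset.mem_univ i, hn⟩))
  | one => rfl
  | top => rfl
  | tensor F G ihF ihG =>
    rw [ssubF, ssubF, ihF fun n hn => h n (Finset.mem_union_left _ hn),
      ihG fun n hn => h n (Finset.mem_union_right _ hn)]
  | limp F G ihF ihG =>
    rw [ssubF, ssubF, ihF fun n hn => h n (Finset.mem_union_left _ hn),
      ihG fun n hn => h n (Finset.mem_union_right _ hn)]
  | with_ F G ihF ihG =>
    rw [ssubF, ssubF, ihF fun n hn => h n (Finset.mem_union_left _ hn),
      ihG fun n hn => h n (Finset.mem_union_right _ hn)]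
  | ex F ih =>
    rw [ssubF, ssubF, ih]
    intro n hn
    cases n with
    | zero => rfl
    | succ n => show (θ n).lift 0 = (τ n).lift 0; rw [h n (mem_predFv hn)]
  | all F ih =>
    rw [ssubF, ssubF, ih]
    intro n hn
    cases n with
    | zero => rfl
    | succ n => show (θ n).lift 0 = (τ n).lift 0; rw [h n (mem_predFv hn)]
  | bang a F ih => rw [ssubF, ssubF, ih h]

/-! ### c-semiring order lemmas -/

variable (S : CSemiring A)

theorem cs_le_refl (a : A) : S.le a a := S.add_idem a

theorem cs_le_trans {a b c : A} (h1 : S.le a b) (h2 : S.le b c) : S.le a c := by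
  unfold CSemiring.le at *
  rw [← h2, ← S.add_assoc, h1]

theorem cs_mul_le_mul {a b c d : A} (h1 : S.le a b) (h2 : S.le c d) :
    S.le (S.mul a c) (S.mul b d) := by
  unfold CSemiring.le at *
  have e1 : S.add (S.mul a c) (S.mul b c) = S.mul b c := by
    rw [S.mul_comm a c, S.mul_comm b c, ← S.mul_add, h1]
  have e2 : S.add (S.mul b c) (S.mul b d) = S.mul b d := by
    rw [← S.mul_add, h2]
  rw [← e2, ← S.add_assoc, e1]

theorem cs_prod_append (l₁ l₂ : List A) :
    S.prod (l₁ ++ l₂) = S.mul (S.prod l₁) (S.prod l₂) := by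
  induction l₁ with
  | nil => show S.prod l₂ = S.mul S.top (S.prod l₂); rw [S.mul_comm, S.mul_unit]
  | cons a l ih =>
    show S.mul a (S.prod (l ++ l₂)) = _
    rw [ih]
    show _ = S.mul (S.mul a (S.prod l)) (S.prod l₂)
    rw [S.mul_assoc]

/-! ### Admissibility of substitution in proofs -/

theorem map_bangify_coe (θ : ℕ → STerm Fn) (L : List (A × SFormula A Fn Pr)) :
    Multiset.map (ssubF θ) (↑(L.map (fun p => SFormula.bang p.1 p.2)) : Multiset (SFormula A Fn Pr))
      = (↑((L.map (fun p => (p.1, ssubF θ p.2))).map (fun p => SFormula.bang p.1 p.2)) : Multiset (SFormula A Fn Pr)) := by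
  rw [Multiset.map_coe, List.map_map, List.map_map]
  rfl

theorem map_lift_comm (θ : ℕ → STerm Fn) (Γ : Multiset (SFormula A Fn Pr)) :
    Multiset.map (ssubF (upv θ)) (Multiset.map (SFormula.lift 0) Γ)
      = Multiset.map (SFormula.lift 0) (Multiset.map (ssubF θ) Γ) := by
  rw [Multiset.map_map, Multiset.map_map]
  exact Multiset.map_congr rfl fun K _ => ssubF_lift0 θ K

theorem subst_proof {c Γ G} (h : SELLS S Fn Pr c Γ G) :
    ∀ θ : ℕ → STerm Fn, SELLS S Fn Pr c (Γ.map (ssubF θ)) (ssubF θ G) := by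
  induction h with
  | init c p ts =>
    intro θ
    rw [Multiset.map_singleton]
    exact SELLS.init c p _
  | oneR c => intro θ; exact SELLS.oneR c
  | oneL h ih =>
    intro θ
    rw [Multiset.map_cons]
    exact SELLS.oneL (ih θ)
  | tensorR h1 h2 ih1 ih2 =>
    intro θ
    rw [Multiset.map_add]
    exact SELLS.tensorR (ih1 θ) (ih2 θ)
  | tensorL h ih =>
    intro θ
    rw [Multiset.map_cons]
    refine SELLS.tensorL ?_
    have := ih θ
    rw [Multiset.map_cons, Multiset.map_cons] at this
    exact this
  | limpR h ih =>
    intro θ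
    refine SELLS.limpR ?_
    have := ih θ
    rw [Multiset.map_cons] at this
    exact this
  | limpL h1 h2 ih1 ih2 =>
    intro θ
    rw [Multiset.map_cons, Multiset.map_add]
    refine SELLS.limpL (ih1 θ) ?_
    have := ih2 θ
    rw [Multiset.map_cons] at this
    exact this
  | withR h1 h2 ih1 ih2 => intro θ; exact SELLS.withR (ih1 θ) (ih2 θ)
  | withL1 h ih =>
    intro θ
    rw [Multiset.map_cons]
    refine SELLS.withL1 ?_
    have := ih θ
    rw [Multiset.map_cons] at this
    exact this
  | withL2 h ih =>
    intro θ
    rw [Multiset.map_cons]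
    refine SELLS.withL2 ?_
    have := ih θ
    rw [Multiset.map_cons] at this
    exact this
  | topR c Γ => intro θ; exact SELLS.topR c _
  | exR t h ih =>
    intro θ
    refine SELLS.exR (ssubT θ t) ?_
    have := ih θ
    rw [ssubF_subst0] at this
    exact this
  | exL h ih =>
    intro θ
    rw [Multiset.map_cons]
    refine SELLS.exL ?_
    have := ih (upv θ)
    rw [Multiset.map_cons, map_lift_comm, ssubF_lift0] at this
    exact this
  | allL t h ih =>
    intro θ
    rw [Multiset.map_cons]
    refine SELLS.allL (ssubT θ t) ?_
    have := ih θ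
    rw [Multiset.map_cons, ssubF_subst0] at this
    exact this
  | allR h ih =>
    intro θ
    refine SELLS.allR ?_
    have := ih (upv θ)
    rw [map_lift_comm] at this
    exact this
  | der h ih =>
    intro θ
    rw [Multiset.map_cons]
    refine SELLS.der ?_
    have := ih θ
    rw [Multiset.map_cons] at this
    exact this
  | weak h ih =>
    intro θ
    rw [Multiset.map_cons]
    exact SELLS.weak (ih θ)
  | contr h ih =>
    intro θ
    rw [Multiset.map_cons]
    refine SELLS.contr ?_
    have := ih θ
    rw [Multiset.map_cons, Multiset.map_cons] at this
    exact this
  | prom L hle h ih =>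
    intro θ
    rw [map_bangify_coe]
    refine SELLS.prom _ ?_ ?_
    · have e : (L.map (fun p => (p.1, ssubF θ p.2))).map Prod.fst = L.map Prod.fst := by
        rw [List.map_map]; rfl
      rw [e]
      exact hle
    · have := ih θ
      rw [map_bangify_coe] at this
      exact this
  | cut h1 h2 ih1 ih2 =>
    intro θ
    rw [Multiset.map_add]
    refine SELLS.cut (ih1 θ) ?_
    have := ih2 θ
    rw [Multiset.map_cons] at this
    exact this

/-! ### Admissible weakening / contraction by multisets of banged formulas -/

theorem weak_multi {c Δ G} (L : List (A × SFormula A Fn Pr))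
    (h : SELLS S Fn Pr c Δ G) :
    SELLS S Fn Pr c (↑(L.map (fun p => SFormula.bang p.1 p.2)) + Δ) G := by
  induction L with
  | nil => simpa using h
  | cons p L ih =>
    have e : (↑((p :: L).map (fun p => SFormula.bang p.1 p.2)) : Multiset (SFormula A Fn Pr)) + Δ
        = SFormula.bang p.1 p.2 ::ₘ ((↑(L.map (fun p => SFormula.bang p.1 p.2)) : Multiset (SFormula A Fn Pr)) + Δ) := by
      rw [List.map_cons, ← Multiset.cons_coe, Multiset.cons_add]
    rw [e]
    exact SELLS.weak ih

theorem contr_multi {c G} (L : List (A × SFormula A Fn Pr)) (Δ : Multiset (SFormula A Fn Pr))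
    (h : SELLS S Fn Pr c (↑(L.map (fun p => SFormula.bang p.1 p.2)) + (↑(L.map (fun p => SFormula.bang p.1 p.2)) + Δ)) G) :
    SELLS S Fn Pr c (↑(L.map (fun p => SFormula.bang p.1 p.2)) + Δ) G := by
  induction L generalizing Δ with
  | nil => simpa using h
  | cons p L ih =>
    have ec : (↑((p :: L).map (fun p => SFormula.bang p.1 p.2)) : Multiset (SFormula A Fn Pr))
        = .bang p.1 p.2 ::ₘ ↑(L.map (fun p => SFormula.bang p.1 p.2)) := by
      rw [List.map_cons, ← Multiset.cons_coe]
    rw [ec] at h ⊢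
    set B : Multiset (SFormula A Fn Pr) := ↑(L.map (fun p => SFormula.bang p.1 p.2)) with hB
    set b : SFormula A Fn Pr := .bang p.1 p.2 with hb
    have e1 : (b ::ₘ B) + ((b ::ₘ B) + Δ) = B + (B + (b ::ₘ b ::ₘ Δ)) := by
      simp only [← Multiset.singleton_add]
      abel
    rw [e1] at h
    have h2 := ih _ h
    have e2 : B + (b ::ₘ b ::ₘ Δ) = b ::ₘ b ::ₘ (B + Δ) := by
      simp only [← Multiset.singleton_add]
      abel
    rw [e2] at h2
    have h3 := SELLS.contr h2
    have e3 : (b ::ₘ B) + Δ = b ::ₘ (B + Δ) := by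
      simp only [← Multiset.singleton_add]
      abel
    rw [e3]
    exact h3

end SellsCutElim

namespace SellsCutElim

variable {A : Type} {Fn Pr : ℕ → Type} (S : CSemiring A)

/-! ### Eigenvariable lemmas -/

/-- the renaming used to introduce an eigenvariable -/
def eigv (x : ℕ) : ℕ → STerm Fn := fun n => if n = x then .var 0 else .var (n + 1)

theorem ssubF_eigv_subst {x : ℕ} {H : SFormula A Fn Pr}
    (hx : ∀ n ∈ fvF H, n < x) :
    ssubF (eigv x) (H.subst 0 (.var x)) = H := by
  rw [substF_eq_ssubF, ssubF_ssubF]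
  have : ssubF (fun n => ssubT (eigv x) (sval 0 (.var x) n)) H = ssubF varv H := by
    apply ssubF_congr
    intro n hn
    cases n with
    | zero =>
      show ssubT (eigv x) (if (0:ℕ) < 0 then _ else if (0:ℕ) = 0 then _ else _) = _
      rw [if_neg (by omega), if_pos rfl]
      show eigv x x = _
      rw [eigv, if_pos rfl]
      rfl
    | succ m =>
      show ssubT (eigv x) (sval 0 (.var x) (m+1)) = _
      rw [sval, if_neg (by omega), if_neg (by omega), Nat.add_sub_cancel]
      show eigv x m = _
      rw [eigv, if_neg (by have := hx (m+1) hn; omega)]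
      rfl
  rw [this, ssubF_var]

theorem ssubF_eigv_lift {x : ℕ} {K : SFormula A Fn Pr}
    (hx : ∀ n ∈ fvF K, n < x) :
    ssubF (eigv x) K = K.lift 0 := by
  rw [liftF_eq_ssubF]
  apply ssubF_congr
  intro n hn
  rw [eigv, if_neg (by have := hx n hn; omega), lval, if_neg (by omega)]

/-- a bound on the free variables of a multiset of formulas -/
def fvC (Γ : Multiset (SFormula A Fn Pr)) : Finset ℕ := (Γ.map fvF).sup

theorem fv_mem_fvC {Γ : Multiset (SFormula A Fn Pr)} {K} (hK : K ∈ Γ) {n}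
    (hn : n ∈ fvF K) : n ∈ fvC Γ := by
  have hle : fvF K ≤ fvC Γ := Multiset.le_sup (Multiset.mem_map_of_mem fvF hK)
  exact hle hn

theorem eigenR {c : Bool} {H : SFormula A Fn Pr} {Γ : Multiset (SFormula A Fn Pr)}
    (h : ∀ t : STerm Fn, SELLS S Fn Pr c Γ (H.subst 0 t)) :
    SELLS S Fn Pr c (Γ.map (SFormula.lift 0)) H := by
  set x : ℕ := (fvF H ∪ fvC Γ).sup id + 1 with hxdef
  have hbound : ∀ n ∈ fvF H ∪ fvC Γ, n < x := by
    intro n hn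
    have : id n ≤ (fvF H ∪ fvC Γ).sup id := Finset.le_sup hn
    simp only [id] at this
    omega
  have h1 := subst_proof S (h (.var x)) (eigv x)
  rw [ssubF_eigv_subst (fun n hn => hbound n (Finset.mem_union_left _ hn))] at h1
  have h2 : Multiset.map (ssubF (eigv x)) Γ = Multiset.map (SFormula.lift 0) Γ :=
    Multiset.map_congr rfl fun K hK =>
      ssubF_eigv_lift fun n hn => hbound n (Finset.mem_union_right _ (fv_mem_fvC hK hn))
  rw [h2] at h1
  exact h1

theorem eigenL {c : Bool} {H G : SFormula A Fn Pr} {Δ : Multiset (SFormula A Fn Pr)}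
    (h : ∀ t : STerm Fn, SELLS S Fn Pr c (H.subst 0 t ::ₘ Δ) G) :
    SELLS S Fn Pr c (H ::ₘ Δ.map (SFormula.lift 0)) (G.lift 0) := by
  set x : ℕ := ((fvF H ∪ fvF G) ∪ fvC Δ).sup id + 1 with hxdef
  have hbound : ∀ n ∈ (fvF H ∪ fvF G) ∪ fvC Δ, n < x := by
    intro n hn
    have : id n ≤ ((fvF H ∪ fvF G) ∪ fvC Δ).sup id := Finset.le_sup hn
    simp only [id] at this
    omega
  have h1 := subst_proof S (h (.var x)) (eigv x)
  rw [Multiset.map_cons] at h1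
  rw [ssubF_eigv_subst (fun n hn =>
    hbound n (Finset.mem_union_left _ (Finset.mem_union_left _ hn)))] at h1
  have h2 : Multiset.map (ssubF (eigv x)) Δ = Multiset.map (SFormula.lift 0) Δ :=
    Multiset.map_congr rfl fun K hK =>
      ssubF_eigv_lift fun n hn => hbound n (Finset.mem_union_right _ (fv_mem_fvC hK hn))
  rw [h2] at h1
  rw [ssubF_eigv_lift (fun n hn =>
    hbound n (Finset.mem_union_left _ (Finset.mem_union_right _ hn)))] at h1
  exact h1

end SellsCutElim

namespace SellsCutElim

variable {A : Type} {Fn Pr : ℕ → Type}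

/-! ### The syntactic phase space -/

/-- Cut-free provability. -/
def Prov (S : CSemiring A) (Γ : Multiset (SFormula A Fn Pr)) (G : SFormula A Fn Pr) : Prop :=
  SELLS S Fn Pr false Γ G

def dua (S : CSemiring A) (X : Set (Multiset (SFormula A Fn Pr))) :
    Set (Multiset (SFormula A Fn Pr) × SFormula A Fn Pr) :=
  {p | ∀ γ ∈ X, Prov S (γ + p.1) p.2}

def cl (S : CSemiring A) (X : Set (Multiset (SFormula A Fn Pr))) :
    Set (Multiset (SFormula A Fn Pr)) :=
  {δ | ∀ p ∈ dua S X, Prov S (δ + p.1) p.2}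

variable (S : CSemiring A)

theorem subset_cl {X : Set (Multiset (SFormula A Fn Pr))} : X ⊆ cl S X :=
  fun γ hγ p hp => hp γ hγ

theorem cl_mono {X Y : Set (Multiset (SFormula A Fn Pr))} (h : X ⊆ Y) :
    cl S X ⊆ cl S Y :=
  fun δ hδ p hp => hδ p fun γ hγ => hp γ (h hγ)

theorem cl_idem {X : Set (Multiset (SFormula A Fn Pr))} : cl S (cl S X) ⊆ cl S X :=
  fun δ hδ p hp => hδ p fun γ hγ => hγ p hp

/-- Key lemma: closure is compatible with context composition. -/
theorem cl_cut {X Y : Set (Multiset (SFormula A Fn Pr))} (hY : cl S Y ⊆ Y)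
    {δ Θ : Multiset (SFormula A Fn Pr)} (hδ : δ ∈ cl S X)
    (h : ∀ γ ∈ X, γ + Θ ∈ Y) : δ + Θ ∈ Y := by
  apply hY
  intro p hp
  have hmem : (Θ + p.1, p.2) ∈ dua S X := by
    intro γ hγ
    have := hp (γ + Θ) (h γ hγ)
    rwa [add_assoc] at this
  have := hδ (Θ + p.1, p.2) hmem
  rwa [← add_assoc] at this

/-- Contexts consisting of banged formulas whose labels multiply to at least `b`. -/
def BangGe (b : A) : Set (Multiset (SFormula A Fn Pr)) :=
  {γ | ∃ L : List (A × SFormula A Fn Pr),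
    γ = ↑(L.map (fun p => SFormula.bang p.1 p.2)) ∧ S.le b (S.prod (L.map Prod.fst))}

/-- The interpretation of formulas in the syntactic phase space. -/
def interp : SFormula A Fn Pr → (ℕ → STerm Fn) → Set (Multiset (SFormula A Fn Pr))
  | .atom p ts, σ => cl S {({.atom p fun i => ssubT σ (ts i)} : Multiset _)}
  | .one, _ => cl S {0}
  | .top, _ => Set.univ
  | .tensor F G, σ => cl S (Set.image2 (· + ·) (interp F σ) (interp G σ))
  | .limp F G, σ => {Γ | ∀ δ ∈ interp F σ, Γ + δ ∈ interp G σ}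
  | .with_ F G, σ => interp F σ ∩ interp G σ
  | .ex F, σ => cl S (⋃ t : STerm Fn, interp F (consv t σ))
  | .all F, σ => ⋂ t : STerm Fn, interp F (consv t σ)
  | .bang a F, σ => cl S (interp F σ ∩ BangGe S a)

theorem interp_closed (F : SFormula A Fn Pr) (σ : ℕ → STerm Fn) :
    cl S (interp S F σ) ⊆ interp S F σ := by
  induction F generalizing σ with
  | atom p ts => exact cl_idem S
  | one => exact cl_idem S
  | top => exact fun δ _ => Set.mem_univ δ
  | tensor F G ihF ihG => exact cl_idem S
  | limp F G ihF ihG =>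
    intro δ hδ γ hγ
    apply ihG σ
    intro p hp
    have hmem : (γ + p.1, p.2) ∈ dua S (interp S (SFormula.limp F G) σ) := by
      intro c hc
      have := hp (c + γ) (hc γ hγ)
      rwa [add_assoc] at this
    have := hδ (γ + p.1, p.2) hmem
    rwa [← add_assoc] at this
  | with_ F G ihF ihG =>
    intro δ hδ
    constructor
    · exact ihF σ (cl_mono S Set.inter_subset_left hδ)
    · exact ihG σ (cl_mono S Set.inter_subset_right hδ)
  | ex F ih => exact cl_idem S
  | all F ih =>
    intro δ hδ
    refine Set.mem_iInter.2 fun t => ?_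
    exact ih (consv t σ) (cl_mono S (Set.iInter_subset _ t) hδ)
  | bang a F ih => exact cl_idem S

/-! ### Semantic substitution lemmas -/

theorem ssubT_consv_lift (t : STerm Fn) (σ : ℕ → STerm Fn) (u : STerm Fn) :
    ssubT (consv t σ) (u.lift 0) = ssubT σ u := by
  rw [lift_eq_ssubT, ssubT_ssubT]
  congr 1

theorem interp_ssubF (F : SFormula A Fn Pr) :
    ∀ (θ σ : ℕ → STerm Fn), interp S (ssubF θ F) σ = interp S F (fun n => ssubT σ (θ n)) := by
  induction F with
  | atom p ts =>
    intro θ σ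
    have e : (fun i => ssubT σ (ssubT θ (ts i))) = fun i => ssubT (fun n => ssubT σ (θ n)) (ts i) :=
      funext fun i => ssubT_ssubT σ θ (ts i)
    simp only [ssubF, interp, e]
  | one => intro θ σ; rfl
  | top => intro θ σ; rfl
  | tensor F G ihF ihG =>
    intro θ σ
    simp only [ssubF, interp, ihF, ihG]
  | limp F G ihF ihG =>
    intro θ σ
    simp only [ssubF, interp, ihF, ihG]
  | with_ F G ihF ihG =>
    intro θ σ
    simp only [ssubF, interp, ihF, ihG]
  | ex F ih =>
    intro θ σ
    simp only [ssubF, interp]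
    refine congrArg (cl S) (Set.iUnion_congr fun t => ?_)
    rw [ih]
    have e : (fun n => ssubT (consv t σ) (upv θ n)) = consv t (fun n => ssubT σ (θ n)) := by
      funext n
      cases n with
      | zero => rfl
      | succ n => exact ssubT_consv_lift t σ (θ n)
    rw [e]
  | all F ih =>
    intro θ σ
    simp only [ssubF, interp]
    refine Set.iInter_congr fun t => ?_
    rw [ih]
    have e : (fun n => ssubT (consv t σ) (upv θ n)) = consv t (fun n => ssubT σ (θ n)) := by
      funext n
      cases n with
      | zero => rfl
      | succ n => exact ssubT_consv_lift t σ (θ n)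
    rw [e]
  | bang a F ih =>
    intro θ σ
    simp only [ssubF, interp, ih]

theorem interp_subst0 (F : SFormula A Fn Pr) (σ : ℕ → STerm Fn) (t : STerm Fn) :
    interp S (F.subst 0 t) σ = interp S F (consv (ssubT σ t) σ) := by
  rw [substF_eq_ssubF, interp_ssubF]
  have e : (fun n => ssubT σ (sval 0 t n)) = consv (ssubT σ t) σ := by
    funext n
    cases n with
    | zero => rfl
    | succ n =>
      show ssubT σ (sval 0 t (n + 1)) = σ n
      rw [sval, if_neg (by omega), if_neg (by omega), Nat.add_sub_cancel]
      rfl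
  rw [e]

theorem interp_lift0 (F : SFormula A Fn Pr) (σ : ℕ → STerm Fn) (t : STerm Fn) :
    interp S (F.lift 0) (consv t σ) = interp S F σ := by
  rw [liftF_eq_ssubF, interp_ssubF]
  have e : (fun n => ssubT (consv t σ) (lval 0 n)) = σ := by
    funext n
    show ssubT (consv t σ) (.var (if n < 0 then n else n + 1)) = σ n
    rw [if_neg (by omega)]
    rfl
  rw [e]

end SellsCutElim

namespace SellsCutElim

variable {A : Type} {Fn Pr : ℕ → Type} (S : CSemiring A)

/-! ### Interpretation of contexts -/

def Forces (σ : ℕ → STerm Fn) (Γ : Multiset (SFormula A Fn Pr)) :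
    Set (Multiset (SFormula A Fn Pr)) :=
  {δ | ∃ l : List (SFormula A Fn Pr × Multiset (SFormula A Fn Pr)),
    Γ = ↑(l.map Prod.fst) ∧ δ = (l.map Prod.snd).sum ∧ ∀ p ∈ l, p.2 ∈ interp S p.1 σ}

theorem Forces_zero {σ : ℕ → STerm Fn} {δ : Multiset (SFormula A Fn Pr)} :
    δ ∈ Forces S σ 0 ↔ δ = 0 := by
  constructor
  · rintro ⟨l, hΓ, hδ, -⟩
    have : l.map Prod.fst = [] := by
      rw [← Multiset.coe_eq_zero]; exact hΓ.symm
    have hl : l = [] := List.map_eq_nil_iff.1 this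
    subst hl
    simpa using hδ
  · rintro rfl
    exact ⟨[], by simp⟩

theorem Forces_cons {σ : ℕ → STerm Fn} {F : SFormula A Fn Pr}
    {Γ δ : Multiset (SFormula A Fn Pr)} :
    δ ∈ Forces S σ (F ::ₘ Γ) ↔
      ∃ d δ', d ∈ interp S F σ ∧ δ' ∈ Forces S σ Γ ∧ δ = d + δ' := by
  constructor
  · rintro ⟨l, hΓ, hδ, hall⟩
    have hmem : F ∈ l.map Prod.fst := by
      rw [← Multiset.mem_coe, ← hΓ]
      exact Multiset.mem_cons_self F Γ
    obtain ⟨p, hp, hpF⟩ := List.mem_map.1 hmem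
    obtain ⟨l₁, l₂, rfl⟩ := List.append_of_mem hp
    refine ⟨p.2, (l₁.map Prod.snd).sum + (l₂.map Prod.snd).sum,
      hpF ▸ hall p hp, ⟨l₁ ++ l₂, ?_, by simp, fun q hq => hall q (by
        rcases List.mem_append.1 hq with h | h
        · exact List.mem_append.2 (Or.inl h)
        · exact List.mem_append.2 (Or.inr (List.mem_cons_of_mem _ h)))⟩, ?_⟩
    · -- Γ = ↑((l₁ ++ l₂).map Prod.fst)
      have e : ((l₁ ++ p :: l₂).map Prod.fst : Multiset (SFormula A Fn Pr))
          = F ::ₘ ↑((l₁ ++ l₂).map Prod.fst) := by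
      -- as multisets
        simp only [List.map_append, List.map_cons, hpF]
        rw [← Multiset.coe_add, ← Multiset.coe_add, ← Multiset.cons_coe,
          ← Multiset.singleton_add, ← Multiset.singleton_add]
        abel
      rw [e] at hΓ
      exact ((Multiset.cons_inj_right F).1 hΓ)
    · rw [hδ]
      simp only [List.map_append, List.map_cons, List.sum_append, List.sum_cons]
      abel
  · rintro ⟨d, δ', hd, ⟨l, hΓ, hδ', hall⟩, rfl⟩
    refine ⟨(F, d) :: l, ?_, ?_, ?_⟩
    · rw [List.map_cons, ← Multiset.cons_coe, hΓ]
    · rw [List.map_cons, List.sum_cons, hδ']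
    · intro q hq
      rcases List.mem_cons.1 hq with h | h
      · subst h; exact hd
      · exact hall q h

theorem Forces_add {σ : ℕ → STerm Fn} {Γ Δ δ : Multiset (SFormula A Fn Pr)} :
    δ ∈ Forces S σ (Γ + Δ) ↔
      ∃ δ₁ δ₂, δ₁ ∈ Forces S σ Γ ∧ δ₂ ∈ Forces S σ Δ ∧ δ = δ₁ + δ₂ := by
  induction Γ using Multiset.induction generalizing δ with
  | empty =>
    simp only [zero_add]
    constructor
    · intro h
      exact ⟨0, δ, (Forces_zero S).2 rfl, h, (zero_add δ).symm⟩
    · rintro ⟨δ₁, δ₂, h1, h2, rfl⟩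
      rw [(Forces_zero S).1 h1, zero_add]
      exact h2
  | cons F Γ ih =>
    rw [Multiset.cons_add]
    constructor
    · intro h
      obtain ⟨d, δ', hd, hδ', rfl⟩ := (Forces_cons S).1 h
      obtain ⟨δ₁, δ₂, h1, h2, rfl⟩ := ih.1 hδ'
      exact ⟨d + δ₁, δ₂, (Forces_cons S).2 ⟨d, δ₁, hd, h1, rfl⟩, h2, by abel⟩
    · rintro ⟨δ₁, δ₂, h1, h2, rfl⟩
      obtain ⟨d, δ', hd, hδ', rfl⟩ := (Forces_cons S).1 h1
      exact (Forces_cons S).2 ⟨d, δ' + δ₂, hd, ih.2 ⟨δ', δ₂, hδ', h2, rfl⟩, by abel⟩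

theorem Forces_map_lift {σ : ℕ → STerm Fn} {t : STerm Fn}
    {Γ δ : Multiset (SFormula A Fn Pr)} :
    δ ∈ Forces S (consv t σ) (Γ.map (SFormula.lift 0)) ↔ δ ∈ Forces S σ Γ := by
  induction Γ using Multiset.induction generalizing δ with
  | empty => rw [Multiset.map_zero, Forces_zero, Forces_zero]
  | cons F Γ ih =>
    rw [Multiset.map_cons, Forces_cons, Forces_cons, interp_lift0]
    constructor
    · rintro ⟨d, δ', hd, hδ', rfl⟩
      exact ⟨d, δ', hd, ih.1 hδ', rfl⟩
    · rintro ⟨d, δ', hd, hδ', rfl⟩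
      exact ⟨d, δ', hd, ih.2 hδ', rfl⟩

end SellsCutElim

namespace SellsCutElim

variable {A : Type} {Fn Pr : ℕ → Type} (S : CSemiring A)

theorem Forces_singleton {σ : ℕ → STerm Fn} {F : SFormula A Fn Pr}
    {δ : Multiset (SFormula A Fn Pr)} :
    δ ∈ Forces S σ {F} ↔ δ ∈ interp S F σ := by
  rw [show ({F} : Multiset (SFormula A Fn Pr)) = F ::ₘ 0 from rfl, Forces_cons]
  constructor
  · rintro ⟨d, δ', hd, h0, rfl⟩
    rw [(Forces_zero S).1 h0, add_zero]
    exact hd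
  · intro h
    exact ⟨δ, 0, h, (Forces_zero S).2 rfl, (add_zero δ).symm⟩

theorem cl_add {X₁ X₂ : Set (Multiset (SFormula A Fn Pr))}
    {δ₁ δ₂ : Multiset (SFormula A Fn Pr)} (h1 : δ₁ ∈ cl S X₁) (h2 : δ₂ ∈ cl S X₂) :
    δ₁ + δ₂ ∈ cl S (Set.image2 (· + ·) X₁ X₂) := by
  refine cl_cut S (cl_idem S) h1 fun γ₁ hγ₁ => ?_
  rw [add_comm]
  refine cl_cut S (cl_idem S) h2 fun γ₂ hγ₂ => ?_
  rw [add_comm]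
  exact subset_cl S (Set.mem_image2_of_mem hγ₁ hγ₂)

theorem prom_aux (σ : ℕ → STerm Fn) (L : List (A × SFormula A Fn Pr))
    (δ : Multiset (SFormula A Fn Pr))
    (hδ : δ ∈ Forces S σ ↑(L.map (fun p => SFormula.bang p.1 p.2))) :
    δ ∈ cl S (BangGe S (S.prod (L.map Prod.fst)) ∩
        Forces S σ ↑(L.map (fun p => SFormula.bang p.1 p.2))) := by
  induction L generalizing δ with
  | nil =>
    have h0 : δ = 0 := (Forces_zero S).1 (by simpa using hδ)
    subst h0
    refine subset_cl S ⟨⟨[], by simp, ?_⟩, (Forces_zero S).2 rfl⟩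
    · exact cs_le_refl S _
  | cons p L ih =>
    have ec : (↑((p :: L).map (fun p => SFormula.bang p.1 p.2)) : Multiset (SFormula A Fn Pr))
        = SFormula.bang p.1 p.2 ::ₘ ↑(L.map (fun p => SFormula.bang p.1 p.2)) := by
      rw [List.map_cons, ← Multiset.cons_coe]
    rw [ec] at hδ ⊢
    obtain ⟨d, δ', hd, hδ', rfl⟩ := (Forces_cons S).1 hδ
    simp only [interp] at hd
    have h2 := ih δ' hδ'
    have h3 := cl_add S hd h2
    refine cl_mono S ?_ h3
    rintro γ ⟨γ₁, ⟨hγ₁F, M₁, rfl, hM₁⟩, γ₂, ⟨⟨M₂, rfl, hM₂⟩, hγ₂f⟩, rfl⟩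
    constructor
    · refine ⟨M₁ ++ M₂, by rw [List.map_append, ← Multiset.coe_add], ?_⟩
      rw [List.map_append, cs_prod_append]
      show S.le (S.prod ((p :: L).map Prod.fst)) _
      rw [List.map_cons]
      show S.le (S.mul p.1 (S.prod (L.map Prod.fst))) _
      exact cs_mul_le_mul S hM₁ hM₂
    · refine (Forces_cons S).2 ⟨_, _, ?_, hγ₂f, rfl⟩
      exact subset_cl S ⟨hγ₁F, M₁, rfl, hM₁⟩

/-! ### Soundness of SELLS (with cut) in the syntactic phase space -/

theorem sound {c : Bool} {Γ : Multiset (SFormula A Fn Pr)} {G : SFormula A Fn Pr}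
    (h : SELLS S Fn Pr c Γ G) :
    ∀ (σ : ℕ → STerm Fn) (δ : Multiset (SFormula A Fn Pr)),
      δ ∈ Forces S σ Γ → δ ∈ interp S G σ := by
  induction h with
  | init c p ts =>
    intro σ δ hδ
    exact (Forces_singleton S).1 hδ
  | oneR c =>
    intro σ δ hδ
    rw [(Forces_zero S).1 hδ]
    exact subset_cl S rfl
  | oneL h ih =>
    intro σ δ hδ
    obtain ⟨d, δ', hd, hδ', rfl⟩ := (Forces_cons S).1 hδ
    simp only [interp] at hd
    refine cl_cut S (interp_closed S _ σ) hd fun γ hγ => ?_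
    rw [Set.mem_singleton_iff.1 hγ, zero_add]
    exact ih σ δ' hδ'
  | tensorR h1 h2 ih1 ih2 =>
    intro σ δ hδ
    obtain ⟨δ₁, δ₂, hδ₁, hδ₂, rfl⟩ := (Forces_add S).1 hδ
    exact subset_cl S (Set.mem_image2_of_mem (ih1 σ δ₁ hδ₁) (ih2 σ δ₂ hδ₂))
  | tensorL h ih =>
    intro σ δ hδ
    obtain ⟨d, δ', hd, hδ', rfl⟩ := (Forces_cons S).1 hδ
    simp only [interp] at hd
    refine cl_cut S (interp_closed S _ σ) hd fun γ hγ => ?_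
    obtain ⟨γ₁, hγ₁, γ₂, hγ₂, rfl⟩ := hγ
    have := ih σ (γ₁ + (γ₂ + δ'))
      ((Forces_cons S).2 ⟨γ₁, γ₂ + δ', hγ₁, (Forces_cons S).2 ⟨γ₂, δ', hγ₂, hδ', rfl⟩, rfl⟩)
    rwa [← add_assoc] at this
  | limpR h ih =>
    intro σ δ hδ
    simp only [interp]
    intro γ hγ
    have := ih σ (γ + δ) ((Forces_cons S).2 ⟨γ, δ, hγ, hδ, rfl⟩)
    rwa [add_comm] at this
  | limpL h1 h2 ih1 ih2 =>
    intro σ δ hδ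
    obtain ⟨d, δ', hd, hδ', rfl⟩ := (Forces_cons S).1 hδ
    obtain ⟨δ₁, δ₂, hδ₁, hδ₂, rfl⟩ := (Forces_add S).1 hδ'
    simp only [interp] at hd
    have hF := ih1 σ δ₁ hδ₁
    have hH := hd δ₁ hF
    have := ih2 σ (d + δ₁ + δ₂)
      ((Forces_cons S).2 ⟨d + δ₁, δ₂, hH, hδ₂, rfl⟩)
    rwa [add_assoc] at this
  | withR h1 h2 ih1 ih2 =>
    intro σ δ hδ
    exact ⟨ih1 σ δ hδ, ih2 σ δ hδ⟩
  | withL1 h ih =>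
    intro σ δ hδ
    obtain ⟨d, δ', hd, hδ', rfl⟩ := (Forces_cons S).1 hδ
    exact ih σ _ ((Forces_cons S).2 ⟨d, δ', hd.1, hδ', rfl⟩)
  | withL2 h ih =>
    intro σ δ hδ
    obtain ⟨d, δ', hd, hδ', rfl⟩ := (Forces_cons S).1 hδ
    exact ih σ _ ((Forces_cons S).2 ⟨d, δ', hd.2, hδ', rfl⟩)
  | topR c Γ =>
    intro σ δ hδ
    exact Set.mem_univ δ
  | exR t h ih =>
    intro σ δ hδ
    have := ih σ δ hδ
    rw [interp_subst0] at this
    exact subset_cl S (Set.mem_iUnion.2 ⟨ssubT σ t, this⟩)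
  | exL h ih =>
    intro σ δ hδ
    obtain ⟨d, δ', hd, hδ', rfl⟩ := (Forces_cons S).1 hδ
    simp only [interp] at hd
    refine cl_cut S (interp_closed S _ σ) hd fun γ hγ => ?_
    obtain ⟨t, hγt⟩ := Set.mem_iUnion.1 hγ
    have := ih (consv t σ) (γ + δ')
      ((Forces_cons S).2 ⟨γ, δ', hγt, (Forces_map_lift S).2 hδ', rfl⟩)
    rwa [interp_lift0] at this
  | allL t h ih =>
    intro σ δ hδ
    obtain ⟨d, δ', hd, hδ', rfl⟩ := (Forces_cons S).1 hδ
    simp only [interp] at hd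
    have hdF := Set.mem_iInter.1 hd (ssubT σ t)
    rw [← interp_subst0] at hdF
    exact ih σ _ ((Forces_cons S).2 ⟨d, δ', hdF, hδ', rfl⟩)
  | allR h ih =>
    intro σ δ hδ
    simp only [interp]
    refine Set.mem_iInter.2 fun t => ?_
    exact ih (consv t σ) δ ((Forces_map_lift S).2 hδ)
  | der h ih =>
    intro σ δ hδ
    obtain ⟨d, δ', hd, hδ', rfl⟩ := (Forces_cons S).1 hδ
    simp only [interp] at hd
    refine cl_cut S (interp_closed S _ σ) hd fun γ hγ => ?_
    exact ih σ _ ((Forces_cons S).2 ⟨γ, δ', hγ.1, hδ', rfl⟩)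
  | weak h ih =>
    intro σ δ hδ
    obtain ⟨d, δ', hd, hδ', rfl⟩ := (Forces_cons S).1 hδ
    simp only [interp] at hd
    refine cl_cut S (interp_closed S _ σ) hd fun γ hγ => ?_
    obtain ⟨L, rfl, -⟩ := hγ.2
    apply interp_closed S _ σ
    intro q hq
    have hp := hq δ' (ih σ δ' hδ')
    have := weak_multi S L hp
    rwa [← add_assoc] at this
  | contr h ih =>
    intro σ δ hδ
    obtain ⟨d, δ', hd, hδ', rfl⟩ := (Forces_cons S).1 hδ
    simp only [interp] at hd
    refine cl_cut S (interp_closed S _ σ) hd fun γ hγ => ?_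
    have hγi : γ ∈ interp S (SFormula.bang _ _) σ := subset_cl S hγ
    have h2 := ih σ (γ + (γ + δ'))
      ((Forces_cons S).2 ⟨γ, γ + δ', hγi, (Forces_cons S).2 ⟨γ, δ', hγi, hδ', rfl⟩, rfl⟩)
    obtain ⟨L, rfl, -⟩ := hγ.2
    apply interp_closed S _ σ
    intro q hq
    have hp := hq _ h2
    rw [add_assoc, add_assoc] at hp
    have := contr_multi S L (δ' + q.1) hp
    rwa [← add_assoc] at this
  | prom L hle h ih =>
    intro σ δ hδ
    have h1 := prom_aux S σ L δ hδ
    simp only [interp]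
    refine cl_mono S ?_ h1
    rintro γ ⟨⟨M, rfl, hM⟩, hforce⟩
    exact ⟨ih σ _ hforce, M, rfl, cs_le_trans S hle hM⟩
  | cut h1 h2 ih1 ih2 =>
    intro σ δ hδ
    obtain ⟨δ₁, δ₂, hδ₁, hδ₂, rfl⟩ := (Forces_add S).1 hδ
    exact ih2 σ _ ((Forces_cons S).2 ⟨δ₁, δ₂, ih1 σ δ₁ hδ₁, hδ₂, rfl⟩)

end SellsCutElim

namespace SellsCutElim

variable {A : Type} {Fn Pr : ℕ → Type} (S : CSemiring A)

/-! ### The main (Okada-style) lemma -/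

theorem main_lemma (F : SFormula A Fn Pr) :
    ∀ σ : ℕ → STerm Fn,
      (({ssubF σ F} : Multiset (SFormula A Fn Pr)) ∈ interp S F σ) ∧
      (∀ Γ ∈ interp S F σ, Prov S Γ (ssubF σ F)) := by
  induction F with
  | atom p ts =>
    intro σ
    constructor
    · exact subset_cl S rfl
    · intro Γ hΓ
      have hd : ((0 : Multiset (SFormula A Fn Pr)), ssubF σ (SFormula.atom p ts)) ∈
          dua S {({.atom p fun i => ssubT σ (ts i)} : Multiset (SFormula A Fn Pr))} := by
        intro γ hγ
        rw [Set.mem_singleton_iff.1 hγ, add_zero]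
        exact SELLS.init false p _
      have := hΓ _ hd
      rwa [add_zero] at this
  | one =>
    intro σ
    constructor
    · intro q hq
      have := hq 0 rfl
      rw [zero_add] at this
      show Prov S ({SFormula.one} + q.1) q.2
      rw [show ({SFormula.one} : Multiset (SFormula A Fn Pr)) + q.1
          = SFormula.one ::ₘ q.1 from Multiset.singleton_add _ _]
      exact SELLS.oneL this
    · intro Γ hΓ
      have hd : ((0 : Multiset (SFormula A Fn Pr)),
          (SFormula.one : SFormula A Fn Pr)) ∈ dua S {(0 : Multiset (SFormula A Fn Pr))} := by
        intro γ hγ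
        rw [Set.mem_singleton_iff.1 hγ, zero_add]
        exact SELLS.oneR false
      have := hΓ _ hd
      rwa [add_zero] at this
  | tensor F H ihF ihH =>
    intro σ
    constructor
    · intro q hq
      have hmem := hq _ (Set.mem_image2_of_mem ((ihF σ).1) ((ihH σ).1))
      rw [show ({ssubF σ F} : Multiset (SFormula A Fn Pr)) + {ssubF σ H} + q.1
          = ssubF σ F ::ₘ ssubF σ H ::ₘ q.1 by
            rw [add_assoc, Multiset.singleton_add, Multiset.singleton_add]] at hmem
      have := SELLS.tensorL hmem
      rwa [show (SFormula.tensor (ssubF σ F) (ssubF σ H)) ::ₘ q.1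
          = {ssubF σ (SFormula.tensor F H)} + q.1 from (Multiset.singleton_add _ _).symm] at this
    · intro Γ hΓ
      have hd : ((0 : Multiset (SFormula A Fn Pr)), ssubF σ (SFormula.tensor F H)) ∈
          dua S (Set.image2 (· + ·) (interp S F σ) (interp S H σ)) := by
        rintro γ ⟨γ₁, hγ₁, γ₂, hγ₂, rfl⟩
        rw [add_zero]
        exact SELLS.tensorR ((ihF σ).2 γ₁ hγ₁) ((ihH σ).2 γ₂ hγ₂)
      have := hΓ _ hd
      rwa [add_zero] at this
  | limp F H ihF ihH =>
    intro σ
    constructor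
    · simp only [interp]
      intro γ hγ
      apply interp_closed S H σ
      intro q hq
      have hH := hq _ ((ihH σ).1)
      rw [Multiset.singleton_add] at hH
      have hF := (ihF σ).2 γ hγ
      have := SELLS.limpL hF hH
      rw [show (SFormula.limp (ssubF σ F) (ssubF σ H)) ::ₘ (γ + q.1)
          = {SFormula.limp (ssubF σ F) (ssubF σ H)} + γ + q.1 by
            rw [add_assoc, Multiset.singleton_add]] at this
      exact this
    · intro Γ hΓ
      simp only [interp] at hΓ
      have h1 := hΓ _ ((ihF σ).1)
      have h2 := (ihH σ).2 _ h1
      rw [show Γ + {ssubF σ F} = ssubF σ F ::ₘ Γ by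
        rw [add_comm, Multiset.singleton_add]] at h2
      exact SELLS.limpR h2
  | with_ F H ihF ihH =>
    intro σ
    constructor
    · constructor
      · apply interp_closed S F σ
        intro q hq
        have := hq _ ((ihF σ).1)
        rw [Multiset.singleton_add] at this
        have h2 := SELLS.withL1 (F := ssubF σ F) (H := ssubF σ H) this
        rwa [← Multiset.singleton_add] at h2
      · apply interp_closed S H σ
        intro q hq
        have := hq _ ((ihH σ).1)
        rw [Multiset.singleton_add] at this
        have h2 := SELLS.withL2 (F := ssubF σ F) (H := ssubF σ H) this
        rwa [← Multiset.singleton_add] at h2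
    · intro Γ hΓ
      exact SELLS.withR ((ihF σ).2 Γ hΓ.1) ((ihH σ).2 Γ hΓ.2)
  | top =>
    intro σ
    exact ⟨Set.mem_univ _, fun Γ _ => SELLS.topR false Γ⟩
  | ex F ih =>
    intro σ
    constructor
    · intro q hq
      have hall : ∀ t : STerm Fn,
          SELLS S Fn Pr false ((ssubF (upv σ) F).subst 0 t ::ₘ q.1) q.2 := by
        intro t
        have hmem := hq _ (Set.mem_iUnion.2 ⟨t, (ih (consv t σ)).1⟩)
        rw [Multiset.singleton_add, ← subst0_ssubF_upv] at hmem
        exact hmem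
      have he := eigenL S hall
      have := SELLS.exL he
      rwa [← Multiset.singleton_add] at this
    · intro Γ hΓ
      have hd : ((0 : Multiset (SFormula A Fn Pr)), ssubF σ (SFormula.ex F)) ∈
          dua S (⋃ t : STerm Fn, interp S F (consv t σ)) := by
        intro γ hγ
        obtain ⟨t, hγt⟩ := Set.mem_iUnion.1 hγ
        rw [add_zero]
        refine SELLS.exR t ?_
        rw [subst0_ssubF_upv]
        exact (ih (consv t σ)).2 γ hγt
      have := hΓ _ hd
      rwa [add_zero] at this
  | all F ih =>
    intro σ
    constructor
    · refine Set.mem_iInter.2 fun t => ?_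
      apply interp_closed S F (consv t σ)
      intro q hq
      have hmem := hq _ ((ih (consv t σ)).1)
      rw [Multiset.singleton_add, ← subst0_ssubF_upv] at hmem
      have := SELLS.allL t hmem
      rwa [← Multiset.singleton_add] at this
    · intro Γ hΓ
      have hall : ∀ t : STerm Fn,
          SELLS S Fn Pr false Γ ((ssubF (upv σ) F).subst 0 t) := by
        intro t
        rw [subst0_ssubF_upv]
        exact (ih (consv t σ)).2 Γ (Set.mem_iInter.1 hΓ t)
      exact SELLS.allR (eigenR S hall)
  | bang a F ih =>
    intro σ
    constructor
    · intro q hq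
      refine hq _ ⟨?_, ?_⟩
      · apply interp_closed S F σ
        intro r hr
        have := hr _ ((ih σ).1)
        rw [Multiset.singleton_add] at this
        have h2 := SELLS.der (a := a) this
        rwa [← Multiset.singleton_add] at h2
      · refine ⟨[(a, ssubF σ F)], by simp [ssubF], ?_⟩
        show S.le a (S.prod [a])
        show S.le a (S.mul a S.top)
        rw [S.mul_unit]
        exact cs_le_refl S a
    · intro Γ hΓ
      have hd : ((0 : Multiset (SFormula A Fn Pr)), ssubF σ (SFormula.bang a F)) ∈
          dua S (interp S F σ ∩ BangGe S a) := by
        rintro γ ⟨hγF, M, rfl, hM⟩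
        rw [add_zero]
        exact SELLS.prom M hM ((ih σ).2 _ hγF)
      have := hΓ _ hd
      rwa [add_zero] at this

theorem forces_self (Γ : Multiset (SFormula A Fn Pr)) : Γ ∈ Forces S varv Γ := by
  induction Γ using Multiset.induction with
  | empty => exact (Forces_zero S).2 rfl
  | cons F Γ ih =>
    refine (Forces_cons S).2 ⟨{F}, Γ, ?_, ih, (Multiset.singleton_add F Γ).symm⟩
    have := (main_lemma S F varv).1
    rwa [ssubF_var] at this

end SellsCutElim

/-- Cut-elimination for SELLS: every sequent provable in
`SELLS_Σ` with the cut rule is provable without it. -/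
theorem sells_cut_elimination {A : Type} (S : CSemiring A) (Fn Pr : ℕ → Type)
    (Γ : Multiset (SFormula A Fn Pr)) (G : SFormula A Fn Pr)
    (h : SELLS S Fn Pr true Γ G) : SELLS S Fn Pr false Γ G := by
  have h1 := SellsCutElim.sound S h SellsCutElim.varv Γ (SellsCutElim.forces_self S Γ)
  have h2 := (SellsCutElim.main_lemma S G SellsCutElim.varv).2 Γ h1
  rwa [SellsCutElim.ssubF_var] at h2
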